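/- Let X be a separable real Banach space and C ⊆ S_X a non-empty closed convex subset of the unit sphere such that the setwise stabiliser {T ∈ Isom(X) : T[C] = C} acts transitively on C. Then C consists of a single point. -/

import Mathlib

open Filter Topology

/-- An Ekeland-type variational principle for a bounded closed set and a
continuous linear functional. -/
lemma ekeland_support {X : Type*} [NormedAddCommGroup X] [NormedSpace ℝ X] [CompleteSpace X]
    (C : Set X) (hne : C.Nonempty) (hclosed : IsClosed C)
    (hbdd : ∀ c ∈ C, ‖c‖ ≤ 1)
    (ψ : X →L[ℝ] ℝ) {ε : ℝ} (hε : 0 < ε) :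
    ∃ w ∈ C, ∀ c ∈ C, ψ c ≤ ψ w + ε * ‖c - w‖ := by
  by_contra hcon
  push_neg at hcon
  -- hcon : ∀ w ∈ C, ∃ c ∈ C, ψ w + ε * ‖c - w‖ < ψ c
  set S : X → Set X := fun w => {c | c ∈ C ∧ ψ w + ε * ‖c - w‖ < ψ c} with hS
  have hbddA : ∀ v : X, BddAbove (ψ '' S v) := by
    intro v
    refine ⟨‖ψ‖, ?_⟩
    rintro _ ⟨c, hc, rfl⟩
    calc ψ c ≤ |ψ c| := le_abs_self _
    _ = ‖ψ c‖ := rfl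
    _ ≤ ‖ψ‖ * ‖c‖ := ψ.le_opNorm c
    _ ≤ ‖ψ‖ * 1 := by
        have := hbdd c hc.1
        nlinarith [norm_nonneg ψ]
    _ = ‖ψ‖ := mul_one _
  have hSne : ∀ w ∈ C, (S w).Nonempty := by
    intro w hw
    obtain ⟨c, hc, hlt⟩ := hcon w hw
    exact ⟨c, hc, hlt⟩
  have key : ∀ n : ℕ, ∀ w, w ∈ C → ∃ c, c ∈ C ∧ (ψ w + ε * ‖c - w‖ < ψ c) ∧
      sSup (ψ '' S w) - (1/2)^n < ψ c := by
    intro n w hw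
    have h1 : sSup (ψ '' S w) - (1/2)^n < sSup (ψ '' S w) := by
      have : (0:ℝ) < (1/2)^n := by positivity
      linarith
    obtain ⟨_, ⟨c, hc, rfl⟩, hlt⟩ :=
      exists_lt_of_lt_csSup ((hSne w hw).image ψ) h1
    exact ⟨c, hc.1, hc.2, hlt⟩
  choose! g hg1 hg2 hg3 using key
  let x : ℕ → X := fun n => Nat.rec hne.choose (fun n xn => g n xn) n
  have hx0 : x 0 = hne.choose := rfl
  have hxs : ∀ n, x (n+1) = g n (x n) := fun n => rfl
  have hxC : ∀ n, x n ∈ C := by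
    intro n
    induction n with
    | zero => exact hne.choose_spec
    | succ n ih => rw [hxs n]; exact hg1 n (x n) ih
  have hstep : ∀ n, ψ (x n) + ε * ‖x (n+1) - x n‖ < ψ (x (n+1)) := by
    intro n
    have := hg2 n (x n) (hxC n)
    rw [← hxs n] at this
    exact this
  have hmono : Monotone fun n => ψ (x n) := by
    apply monotone_nat_of_le_succ
    intro n
    have h1 := hstep n
    have h2 : 0 ≤ ε * ‖x (n+1) - x n‖ := by positivity
    linarith
  have hdist : ∀ n m, n ≤ m → ε * ‖x m - x n‖ ≤ ψ (x m) - ψ (x n) := by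
    intro n m hnm
    induction m with
    | zero =>
      have : n = 0 := Nat.le_zero.mp hnm
      subst this; simp
    | succ m ih =>
      rcases Nat.lt_or_ge n (m+1) with h | h
      · have hnm' : n ≤ m := Nat.lt_succ_iff.mp h
        have h1 := ih hnm'
        have h2 := hstep m
        have h3 : ‖x (m+1) - x n‖ ≤ ‖x (m+1) - x m‖ + ‖x m - x n‖ :=
          norm_sub_le_norm_sub_add_norm_sub _ _ _
        nlinarith
      · have : n = m + 1 := le_antisymm hnm h
        subst this; simp
  have hbddrange : BddAbove (Set.range fun n => ψ (x n)) := by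
    refine ⟨‖ψ‖, ?_⟩
    rintro _ ⟨n, rfl⟩
    calc ψ (x n) ≤ |ψ (x n)| := le_abs_self _
    _ = ‖ψ (x n)‖ := rfl
    _ ≤ ‖ψ‖ * ‖x n‖ := ψ.le_opNorm _
    _ ≤ ‖ψ‖ * 1 := by
        have := hbdd _ (hxC n)
        nlinarith [norm_nonneg ψ]
    _ = ‖ψ‖ := mul_one _
  set L : ℝ := ⨆ n, ψ (x n) with hL
  have htendL : Tendsto (fun n => ψ (x n)) atTop (𝓝 L) :=
    tendsto_atTop_ciSup hmono hbddrange
  have hleL : ∀ n, ψ (x n) ≤ L := fun n => le_ciSup hbddrange n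
  have hcauchy : CauchySeq x := by
    apply cauchySeq_of_le_tendsto_0 (fun N => (L - ψ (x N)) / ε)
    · intro n m N hn hm
      wlog hnm : n ≤ m generalizing n m
      · rw [dist_comm]; exact this m n hm hn (le_of_not_ge hnm)
      rw [dist_eq_norm]
      have h1 := hdist n m hnm
      have h2 := hleL m
      have h3 := hmono hn
      rw [norm_sub_rev, le_div_iff₀ hε]
      nlinarith
    · have : Tendsto (fun N => L - ψ (x N)) atTop (𝓝 (L - L)) :=
        (tendsto_const_nhds).sub htendL
      simp only [sub_self] at this
      simpa using this.div_const ε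
  obtain ⟨w, hwlim⟩ := cauchySeq_tendsto_of_complete hcauchy
  have hwC : w ∈ C := hclosed.mem_of_tendsto hwlim (Eventually.of_forall hxC)
  have hψw : Tendsto (fun n => ψ (x n)) atTop (𝓝 (ψ w)) :=
    (ψ.continuous.tendsto w).comp hwlim
  have hLw : L = ψ w := tendsto_nhds_unique htendL hψw
  have hle_w : ∀ n, ψ (x n) ≤ ψ w := by rw [← hLw]; exact hleL
  -- get the contradiction point
  obtain ⟨c, hcC, hclt⟩ := hcon w hwC
  set δ : ℝ := ψ c - ψ w - ε * ‖c - w‖ with hδ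
  have hδpos : 0 < δ := by simp only [hδ]; linarith
  -- eventually c ∈ S (x n)
  have hwx : Tendsto (fun n => ε * ‖w - x n‖) atTop (𝓝 0) := by
    have h1 : Tendsto (fun n => w - x n) atTop (𝓝 (w - w)) :=
      tendsto_const_nhds.sub hwlim
    rw [sub_self] at h1
    have h2 : Tendsto (fun n => ‖w - x n‖) atTop (𝓝 ‖(0:X)‖) :=
      (continuous_norm.tendsto 0).comp h1
    simp only [norm_zero] at h2
    simpa using h2.const_mul ε
  have hev : ∀ᶠ n in atTop, ε * ‖w - x n‖ < δ :=
    hwx.eventually_lt_const hδpos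
  have hfinal : ∀ᶠ n in atTop, ψ c < ψ w + (1/2)^n := by
    filter_upwards [hev] with n hn
    have hcS : c ∈ S (x n) := by
      refine ⟨hcC, ?_⟩
      have h3 : ‖c - x n‖ ≤ ‖c - w‖ + ‖w - x n‖ :=
        norm_sub_le_norm_sub_add_norm_sub _ _ _
      have h4 := hle_w n
      simp only [hδ] at hn
      nlinarith
    have h4 : ψ c ≤ sSup (ψ '' S (x n)) := le_csSup (hbddA (x n)) ⟨c, hcS, rfl⟩
    have h5 := hg3 n (x n) (hxC n)
    rw [← hxs n] at h5
    have h6 := hle_w (n+1)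
    linarith
  have hlim2 : Tendsto (fun n : ℕ => ψ w + (1/2:ℝ)^n) atTop (𝓝 (ψ w)) := by
    have h1 : Tendsto (fun n : ℕ => ((1:ℝ)/2)^n) atTop (𝓝 0) := by
      apply tendsto_pow_atTop_nhds_zero_of_lt_one <;> norm_num
    simpa using tendsto_const_nhds.add h1
  have h8 : ψ c ≤ ψ w :=
    ge_of_tendsto hlim2 (hfinal.mono fun n hn => hn.le)
  have h9 : 0 ≤ ε * ‖c - w‖ := by positivity
  linarith

/-- Let `X` be a separable real Banach space and `C ⊆ S_X` a non-empty closed convex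
subset of the unit sphere such that the setwise stabiliser of `C` in the group of
surjective linear isometries of `X` acts transitively on `C`.  Then `C` is a singleton. -/
theorem singleton_of_transitive_stabiliser
    {X : Type*} [NormedAddCommGroup X] [NormedSpace ℝ X] [CompleteSpace X]
    [TopologicalSpace.SeparableSpace X]
    (C : Set X) (hne : C.Nonempty) (hclosed : IsClosed C) (hconv : Convex ℝ C)
    (hsphere : C ⊆ Metric.sphere (0 : X) 1)
    (htrans : ∀ y ∈ C, ∀ z ∈ C, ∃ T : X ≃ₗᵢ[ℝ] X, T '' C = C ∧ T y = z) :
    ∃ x : X, C = {x} := by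
  obtain ⟨y₀, hy₀⟩ := hne
  suffices h : ∀ y ∈ C, ∀ z ∈ C, y = z by
    exact ⟨y₀, Set.eq_singleton_iff_unique_mem.mpr ⟨hy₀, fun x hx => h x hx y₀ hy₀⟩⟩
  have hne : C.Nonempty := ⟨y₀, hy₀⟩
  have hnorm : ∀ c ∈ C, ‖c‖ = 1 := fun c hc => by
    simpa using mem_sphere_zero_iff_norm.mp (hsphere hc)
  -- a dense sequence in C
  obtain ⟨u, huC, hdense⟩ : ∃ u : ℕ → X, (∀ n, u n ∈ C) ∧ C ⊆ closure (Set.range u) := by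
    have hsepC : TopologicalSpace.SeparableSpace ↥C :=
      (TopologicalSpace.IsSeparable.of_separableSpace C).separableSpace
    have hCne : Nonempty ↥C := ⟨⟨y₀, hy₀⟩⟩
    refine ⟨fun n => (TopologicalSpace.denseSeq ↥C n : X),
      fun n => (TopologicalSpace.denseSeq ↥C n).2, ?_⟩
    intro a ha
    rw [Metric.mem_closure_iff]
    intro δ hδ
    have hdr := TopologicalSpace.denseRange_denseSeq ↥C
    rw [Metric.denseRange_iff] at hdr
    obtain ⟨n, hn⟩ := hdr ⟨a, ha⟩ δ hδ
    exact ⟨_, ⟨n, rfl⟩, by simpa [Subtype.dist_eq] using hn⟩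
  -- the "generic" point cstar
  set wgt : ℕ → ℝ := fun n => (1/2)^(n+1) with hwgt
  have hwpos : ∀ n, 0 < wgt n := fun n => by positivity
  have hwsum : Summable wgt := by
    apply Summable.comp_injective (f := fun n : ℕ => ((1:ℝ)/2)^n) ?_ Nat.succ_injective
    exact summable_geometric_of_lt_one (by norm_num) (by norm_num)
  have hwsum1 : ∑' n, wgt n = 1 := by
    have h0 := tsum_geometric_two' 1
    rw [← h0]
    apply tsum_congr
    intro n
    simp [hwgt, pow_succ, div_eq_mul_inv, inv_pow, mul_comm]
  have hsummable : Summable (fun n => wgt n • u n) := by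
    apply Summable.of_norm
    have hnn : ∀ n, ‖wgt n • u n‖ = wgt n := by
      intro n
      rw [norm_smul, hnorm _ (huC n), mul_one, Real.norm_eq_abs, abs_of_pos (hwpos n)]
    simpa [hnn] using hwsum
  set cstar : X := ∑' n, wgt n • u n with hcstar
  have htN : ∀ N, ∑ n ∈ Finset.range N, wgt n = 1 - (1/2)^N := by
    intro N
    induction N with
    | zero => simp
    | succ N ih =>
      rw [Finset.sum_range_succ, ih]
      simp only [hwgt]
      ring
  have hcstarC : cstar ∈ C := by
    have hps : Tendsto (fun N => ∑ n ∈ Finset.range N, wgt n • u n) atTop (𝓝 cstar) :=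
      hsummable.hasSum.tendsto_sum_nat
    have h1 : Tendsto (fun N : ℕ => ((1:ℝ)/2)^N) atTop (𝓝 0) :=
      tendsto_pow_atTop_nhds_zero_of_lt_one (by norm_num) (by norm_num)
    have h2 : Tendsto (fun N : ℕ => 1 - ((1:ℝ)/2)^N) atTop (𝓝 1) := by
      simpa using tendsto_const_nhds.sub h1
    have hcoef : Tendsto (fun N : ℕ => (1 - ((1:ℝ)/2)^N)⁻¹) atTop (𝓝 1) := by
      have := h2.inv₀ (by norm_num)
      simpa using this
    have hq : Tendsto (fun N => (1 - ((1:ℝ)/2)^N)⁻¹ • (∑ n ∈ Finset.range N, wgt n • u n))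
        atTop (𝓝 cstar) := by
      have := hcoef.smul hps
      simpa using this
    apply hclosed.mem_of_tendsto hq
    filter_upwards [eventually_ge_atTop 1] with N hN
    have htpos : 0 < 1 - ((1:ℝ)/2)^N := by
      have h3 : ((1:ℝ)/2)^N ≤ (1/2)^1 := by
        apply pow_le_pow_of_le_one (by norm_num) (by norm_num) hN
      norm_num at h3 ⊢
      linarith
    rw [Finset.smul_sum]
    have heq : ∀ n, (1 - ((1:ℝ)/2)^N)⁻¹ • (wgt n • u n)
        = ((1 - ((1:ℝ)/2)^N)⁻¹ * wgt n) • u n := fun n => smul_smul _ _ _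
    simp only [heq]
    apply hconv.sum_mem
    · intro i _
      positivity
    · rw [← Finset.mul_sum, htN N, inv_mul_cancel₀ (ne_of_gt htpos)]
    · intro i _
      exact huC i
  clear_value cstar
  -- main argument
  intro y hy z hz
  by_contra hne'
  have hyz : y - z ≠ 0 := sub_ne_zero.mpr hne'
  obtain ⟨ψ, hψnorm, hψyz⟩ := exists_dual_vector ℝ (y - z) (norm_ne_zero_iff.mpr hyz)
  have hψyz' : ψ (y - z) = ‖y - z‖ := by simpa using hψyz
  obtain ⟨w, hwC, hwmin⟩ := ekeland_support C hne hclosed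
    (fun c hc => (hnorm c hc).le) ψ (by norm_num : (0:ℝ) < 1/2)
  set A : Set X := {v | (1/2) * ‖v - w‖ < ψ (v - w)} with hA
  have hAopen : IsOpen A := by
    apply isOpen_lt
    · exact continuous_const.mul ((continuous_id.sub continuous_const).norm)
    · exact ψ.continuous.comp (continuous_id.sub continuous_const)
  have hmemA : ∀ k : X, (1/2) * ‖k‖ < ψ k → w + k ∈ A := by
    intro k hk
    simp only [hA, Set.mem_setOf_eq, add_sub_cancel_left]
    exact hk
  have hAconv : Convex ℝ A := by
    intro a ha b hb s t hs ht hst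
    simp only [hA, Set.mem_setOf_eq] at ha hb ⊢
    have key : s • a + t • b - w = s • (a - w) + t • (b - w) := by
      calc s • a + t • b - w = s • a + t • b - (s + t) • w := by rw [hst, one_smul]
      _ = s • (a - w) + t • (b - w) := by rw [smul_sub, smul_sub, add_smul]; abel
    rw [key, map_add, map_smul, map_smul, smul_eq_mul, smul_eq_mul]
    have hno : ‖s • (a - w) + t • (b - w)‖ ≤ s * ‖a - w‖ + t * ‖b - w‖ := by
      calc ‖s • (a - w) + t • (b - w)‖ ≤ ‖s • (a - w)‖ + ‖t • (b - w)‖ := norm_add_le _ _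
      _ = s * ‖a - w‖ + t * ‖b - w‖ := by
          rw [norm_smul, norm_smul, Real.norm_eq_abs, Real.norm_eq_abs,
            abs_of_nonneg hs, abs_of_nonneg ht]
    rcases eq_or_lt_of_le hs with hs0 | hs0
    · have ht1 : t = 1 := by linarith
      rw [← hs0, ht1]
      simp only [zero_smul, one_smul, zero_add, zero_mul, one_mul]
      exact hb
    · rcases eq_or_lt_of_le ht with ht0 | ht0
      · have hs1 : s = 1 := by linarith
        rw [← ht0, hs1]
        simp only [zero_smul, one_smul, add_zero, zero_mul, one_mul]
        exact ha
      · calc 1/2 * ‖s • (a - w) + t • (b - w)‖ ≤ 1/2 * (s * ‖a - w‖ + t * ‖b - w‖) := by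
              linarith
        _ < s * ψ (a - w) + t * ψ (b - w) := by nlinarith [ha, hb]
  have hdisj : Disjoint A C := by
    rw [Set.disjoint_left]
    intro v hvA hvC
    have h1 := hwmin v hvC
    simp only [hA, Set.mem_setOf_eq, map_sub] at hvA
    linarith
  obtain ⟨f, r, hfA, hfC⟩ := geometric_hahn_banach_open hAconv hAopen hconv hdisj
  have hyzK : (1/2) * ‖y - z‖ < ψ (y - z) := by
    rw [hψyz']
    have : 0 < ‖y - z‖ := norm_pos_iff.mpr hyz
    linarith
  have hfw_le : f w ≤ r := by
    have h1 : ∀ t : ℝ, 0 < t → f w + t * f (y - z) < r := by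
      intro t ht
      have hk : (1/2) * ‖t • (y - z)‖ < ψ (t • (y - z)) := by
        rw [norm_smul, map_smul, Real.norm_eq_abs, abs_of_pos ht, smul_eq_mul]
        nlinarith [hyzK]
      have h2 := hfA _ (hmemA _ hk)
      rw [map_add, map_smul, smul_eq_mul] at h2
      exact h2
    apply le_of_forall_pos_lt_add
    intro η hη
    have htp : 0 < η / (|f (y - z)| + 1) := by positivity
    have h2 := h1 _ htp
    have h3 : |f (y - z)| < |f (y - z)| + 1 := by linarith
    have h4 : -(η / (|f (y - z)| + 1) * |f (y - z)|) ≥ -η := by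
      rw [ge_iff_le, neg_le_neg_iff]
      rw [div_mul_eq_mul_div, div_le_iff₀ (by positivity)]
      nlinarith [abs_nonneg (f (y - z))]
    have h5 : η / (|f (y - z)| + 1) * f (y - z) ≥ -η := by
      have := neg_abs_le (f (y - z))
      nlinarith
    linarith
  have hfweq : f w = r := le_antisymm hfw_le (hfC w hwC)
  have hfneg : f (y - z) < 0 := by
    have h2 := hfA _ (hmemA _ hyzK)
    rw [map_add, hfweq] at h2
    linarith
  -- transitivity: move w to cstar
  obtain ⟨T, hTC, hTw⟩ := htrans w hwC cstar hcstarC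
  have hTmem : ∀ c ∈ C, T c ∈ C := fun c hc => hTC ▸ Set.mem_image_of_mem T hc
  have hTsymm : ∀ c ∈ C, T.symm c ∈ C := by
    intro c hc
    rw [← hTC] at hc
    obtain ⟨a, ha, rfl⟩ := hc
    simpa using ha
  set χ : X →L[ℝ] ℝ := f.comp (T.symm.toContinuousLinearEquiv : X →L[ℝ] X) with hχdef
  have hχ : ∀ v : X, χ v = f (T.symm v) := fun v => rfl
  have hχmin : ∀ c ∈ C, r ≤ χ c := fun c hc => hfC _ (hTsymm c hc)
  have hχstar : χ cstar = r := by
    rw [hχ, ← hTw]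
    simp only [LinearIsometryEquiv.symm_apply_apply]
    exact hfweq
  clear_value χ
  -- tsum computation
  have hsum2 : Summable (fun n => χ (wgt n • u n)) :=
    hsummable.map χ χ.continuous
  have hsum2' : Summable (fun n => wgt n * χ (u n)) := by
    have : (fun n => wgt n * χ (u n)) = fun n => χ (wgt n • u n) := by
      funext n; rw [map_smul, smul_eq_mul]
    rw [this]
    exact hsum2
  have h10 : ∑' n, wgt n * χ (u n) = r := by
    have h12 := χ.map_tsum hsummable
    rw [← hcstar, hχstar] at h12
    calc ∑' n, wgt n * χ (u n) = ∑' n, χ (wgt n • u n) :=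
          tsum_congr fun n => by rw [map_smul, smul_eq_mul]
    _ = r := h12.symm
  have h11 : ∀ n, χ (u n) = r := by
    intro k
    have hge := hχmin (u k) (huC k)
    rcases eq_or_lt_of_le hge with heq | hlt
    · exact heq.symm
    · exfalso
      have hsum3 : Summable (fun n => wgt n * (χ (u n) - r)) := by
        have : (fun n => wgt n * (χ (u n) - r)) = fun n => wgt n * χ (u n) - wgt n * r := by
          funext n; ring
        rw [this]
        exact hsum2'.sub (hwsum.mul_right r)
      have h13 : ∑' n, wgt n * (χ (u n) - r) = 0 := by
        have heq2 : ∀ n, wgt n * (χ (u n) - r) = wgt n * χ (u n) - wgt n * r := fun n => by ring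
        rw [tsum_congr heq2, hsum2'.tsum_sub (hwsum.mul_right r), h10, tsum_mul_right, hwsum1]
        ring
      have h14 : wgt k * (χ (u k) - r) ≤ 0 := by
        rw [← h13]
        apply hsum3.le_tsum k
        intro j _
        exact mul_nonneg (hwpos j).le (sub_nonneg.mpr (hχmin (u j) (huC j)))
      exact absurd h14 (not_le.mpr (mul_pos (hwpos k) (sub_pos.mpr hlt)))
  have h15' : Set.EqOn (⇑χ) (fun _ => r) (Set.range u) := by
    rintro _ ⟨n, rfl⟩
    exact h11 n
  have h15 : Set.EqOn (⇑χ) (fun _ => r) (closure (Set.range u)) :=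
    h15'.closure χ.continuous continuous_const
  have h16 : ∀ c ∈ C, χ c = r := fun c hc => h15 (hdense hc)
  have h17 : f y = r := by
    have := h16 (T y) (hTmem y hy)
    rw [hχ] at this
    simpa using this
  have h18 : f z = r := by
    have := h16 (T z) (hTmem z hz)
    rw [hχ] at this
    simpa using this
  rw [map_sub, h17, h18] at hfneg
  linarith
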